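/- arXiv:2106.00118 — 2 statements merged into one kernel-verified Lean document; each statement's English description precedes it below -/
import Mathlib

section
/- If A is a closed subset of the unit sphere S² with non-empty interior, A is contained in the interior of some hemisphere, and at every boundary point of A there is a closed hemisphere containing A whose boundary passes through that point, then A is spherically convex (i.e., for any two points of A the shorter great-circle arc connecting them lies in A). -/
open scoped InnerProductSpace

noncomputable section

abbrev E3 := EuclideanSpace ℝ (Fin 3)

/-- The unit sphere S² in E³. -/
def S2 : Set E3 := Metric.sphere 0 1

/-- Spherical (geodesic) distance on the unit sphere. -/
def sdist (x y : E3) : ℝ := Real.arccos ⟪x, y⟫_ℝ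

/-- The shorter great-circle arc joining `a` and `b`. -/
def arc (a b : E3) : Set E3 := {x | x ∈ S2 ∧ sdist a x + sdist x b = sdist a b}

/-- Spherical convexity. -/
def SphConvex (A : Set E3) : Prop :=
  A ⊆ S2 ∧ (∀ x ∈ A, -x ∉ A) ∧ ∀ a ∈ A, ∀ b ∈ A, arc a b ⊆ A

/-- Closed hemisphere with center `c`. -/
def hemi (c : E3) : Set E3 := {x ∈ S2 | sdist c x ≤ Real.pi / 2}

/-- Open hemisphere with center `c`. -/
def openHemi (c : E3) : Set E3 := {x ∈ S2 | sdist c x < Real.pi / 2}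

/-- Boundary of `A` relative to the sphere. -/
def relBoundary (A : Set E3) : Set E3 :=
  {p ∈ S2 | ∀ r > 0, (Metric.ball p r ∩ S2 ∩ A).Nonempty ∧ ((Metric.ball p r ∩ S2) \ A).Nonempty}

/-- `A` has nonempty interior relative to the sphere. -/
def relIntNonempty (A : Set E3) : Prop := ∃ p ∈ S2, ∃ r > 0, Metric.ball p r ∩ S2 ⊆ A

/-- A spherical convex body. -/
def SphConvexBody (A : Set E3) : Prop := IsClosed A ∧ SphConvex A ∧ relIntNonempty A

/-- The hemisphere centered at `c` supports `A`. -/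
def Supports (c : E3) (A : Set E3) : Prop :=
  c ∈ S2 ∧ A ⊆ hemi c ∧ ∃ p ∈ A, sdist c p = Real.pi / 2

/-- The hemisphere centered at `c` supports `A` at the point `p`. -/
def SupportsAt (c : E3) (A : Set E3) (p : E3) : Prop :=
  c ∈ S2 ∧ A ⊆ hemi c ∧ p ∈ A ∧ sdist c p = Real.pi / 2

/-- `hemi g` and `hemi h` form a lune: distinct hemispheres with non-antipodal centers. -/
def IsLunePair (g h : E3) : Prop := g ∈ S2 ∧ h ∈ S2 ∧ g ≠ h ∧ g ≠ -h

/-- The center (midpoint) of the semicircle `G/H ⊆ bd(hemi g)` bounding the lune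
`hemi g ∩ hemi h`: the point of the great circle `bd(hemi g)` nearest to `h`. -/
def scCenter (g h : E3) : E3 := ‖h - ⟪h, g⟫_ℝ • g‖⁻¹ • (h - ⟪h, g⟫_ℝ • g)

/-- Thickness of the lune `hemi g ∩ hemi h`: the spherical distance between the
centers of its two bounding semicircles. -/
def luneTh (g h : E3) : ℝ := sdist (scCenter g h) (scCenter h g)

/-- The width of `A` determined by the supporting hemisphere centered at `c`:
the minimal thickness of a lune `K ∩ K*` with `K*` supporting `A`. -/
def widthAt (c : E3) (A : Set E3) : ℝ :=
  sInf {t | ∃ c', Supports c' A ∧ IsLunePair c c' ∧ t = luneTh c c'}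

/-- The thickness of `A`: the minimum of `widthAt` over supporting hemispheres. -/
def thickness (A : Set E3) : ℝ :=
  sInf {t | ∃ c, Supports c A ∧ t = widthAt c A}

/-- `A` is of constant width `w`. -/
def ConstWidth (A : Set E3) (w : ℝ) : Prop := ∀ c, Supports c A → widthAt c A = w

/-- A reduced spherical convex body. -/
def Reduced (R : Set E3) : Prop :=
  SphConvexBody R ∧ ∀ Z, SphConvexBody Z → Z ⊆ R → Z ≠ R → thickness Z < thickness R

/-- Cross product in E³. -/
def cross (u v : E3) : E3 :=
  (WithLp.equiv 2 (Fin 3 → ℝ)).symm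
    ![u 1 * v 2 - u 2 * v 1, u 2 * v 0 - u 0 * v 2, u 0 * v 1 - u 1 * v 0]

/-- Orientation determinant of a triple of vectors in E³. -/
def det3 (u v w : E3) : ℝ := ⟪cross u v, w⟫_ℝ

/-- `m` lies strictly between `m₁` and `m₂` in counterclockwise order
(positively oriented triple): the relation `≺ M₁ M M₂`. -/
def CCWBetween (m₁ m m₂ : E3) : Prop := 0 < det3 m₁ m m₂

/-- `c` is the center of the right supporting hemisphere of `A` at `p`. -/
def RightSupport (c : E3) (A : Set E3) (p : E3) : Prop :=
  SupportsAt c A p ∧ ∀ c', SupportsAt c' A p → 0 ≤ ⟪c', cross p c⟫_ℝ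

/-- `c` is the center of the left supporting hemisphere of `A` at `p`. -/
def LeftSupport (c : E3) (A : Set E3) (p : E3) : Prop :=
  SupportsAt c A p ∧ ∀ c', SupportsAt c' A p → ⟪c', cross p c⟫_ℝ ≤ 0

/-- Spherical angle at vertex `b` of the triangle `a b c`. -/
def sAngle (a b c : E3) : ℝ :=
  InnerProductGeometry.angle (a - ⟪a, b⟫_ℝ • b) (c - ⟪c, b⟫_ℝ • b)

/-- Spherical convex hull. -/
def sconvHull (A : Set E3) : Set E3 := ⋂₀ {B | A ⊆ B ∧ SphConvex B}

/-- Distance from a point to a set, in the spherical metric. -/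
def sInfDist (x : E3) (A : Set E3) : ℝ := sInf (sdist x '' A)

/-- Hausdorff distance with respect to the spherical metric. -/
def sHD (A B : Set E3) : ℝ :=
  max (sSup ((fun a => sInfDist a B) '' A)) (sSup ((fun b => sInfDist b A) '' B))

open Set Metric

lemma mem_S2_iff {x : E3} : x ∈ S2 ↔ ‖x‖ = 1 := mem_sphere_zero_iff_norm

lemma arc_comb {a b x : E3} (ha : ‖a‖ = 1) (hb : ‖b‖ = 1) (hab : -1 < ⟪a, b⟫_ℝ)
    (hx : x ∈ arc a b) : ∃ s t : ℝ, 0 ≤ s ∧ 0 ≤ t ∧ x = s • a + t • b := by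
  obtain ⟨hxS, hsum⟩ := hx
  have hxn : ‖x‖ = 1 := mem_S2_iff.1 hxS
  set ca := ⟪a, x⟫_ℝ with hca
  set cb := ⟪x, b⟫_ℝ with hcb
  set cg := ⟪a, b⟫_ℝ with hcg
  have hca1 : |ca| ≤ 1 := by
    have := abs_real_inner_le_norm a x; rwa [ha, hxn, one_mul] at this
  have hcb1 : |cb| ≤ 1 := by
    have := abs_real_inner_le_norm x b; rwa [hb, hxn, one_mul] at this
  have hcg1 : |cg| ≤ 1 := by
    have := abs_real_inner_le_norm a b; rwa [ha, hb, one_mul] at this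
  rw [abs_le] at hca1 hcb1 hcg1
  set α := Real.arccos ca with hα
  set β := Real.arccos cb with hβ
  set γ := Real.arccos cg with hγ
  have hcosα : Real.cos α = ca := Real.cos_arccos hca1.1 hca1.2
  have hcosβ : Real.cos β = cb := Real.cos_arccos hcb1.1 hcb1.2
  have hcosγ : Real.cos γ = cg := Real.cos_arccos hcg1.1 hcg1.2
  have hsum' : α + β = γ := hsum
  by_cases hone : cg = 1
  · -- γ = 0, x = a
    have hγ0 : γ = 0 := by rw [hγ, hone, Real.arccos_one]
    have hα0 : α = 0 := by
      have := Real.arccos_nonneg ca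
      have := Real.arccos_nonneg cb
      have : α = 0 ∧ β = 0 := by constructor <;> linarith [hsum'.symm ▸ hγ0]
      exact this.1
    have hca' : ca = 1 := by
      have := Real.arccos_eq_zero.1 hα0
      linarith [hca1.2]
    have : ‖x‖ • a = ‖a‖ • x := inner_eq_norm_mul_iff_real.1 (by rw [ha, hxn]; simpa using hca')
    rw [ha, hxn, one_smul, one_smul] at this
    exact ⟨1, 0, zero_le_one, le_rfl, by rw [← this]; simp⟩
  · have hcglt : cg < 1 := lt_of_le_of_ne hcg1.2 hone
    have hγpos : 0 < γ := Real.arccos_pos.2 hcglt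
    have hγltπ : γ < Real.pi := by
      rcases lt_or_eq_of_le (Real.arccos_le_pi cg) with h | h
      · exact h
      · exact absurd (Real.arccos_eq_pi.1 h) (by linarith)
    have hsinγ : 0 < Real.sin γ := Real.sin_pos_of_pos_of_lt_pi hγpos hγltπ
    have hsinα : 0 ≤ Real.sin α :=
      Real.sin_nonneg_of_nonneg_of_le_pi (Real.arccos_nonneg ca) (Real.arccos_le_pi ca)
    have hsinβ : 0 ≤ Real.sin β :=
      Real.sin_nonneg_of_nonneg_of_le_pi (Real.arccos_nonneg cb) (Real.arccos_le_pi cb)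
    obtain ⟨y, hy⟩ : ∃ y : E3, y = Real.sin β • a + Real.sin α • b := ⟨_, rfl⟩
    have hinner : ⟪y, x⟫_ℝ = Real.sin γ := by
      rw [hy, inner_add_left, real_inner_smul_left, real_inner_smul_left, ← hca,
        real_inner_comm x b, ← hcb, ← hsum', Real.sin_add, ← hcosα, ← hcosβ]
      ring
    have hnysq : ‖y‖ ^ 2 = Real.sin γ ^ 2 := by
      have h1 : ‖y‖ ^ 2 = Real.sin β ^ 2 + 2 * (Real.sin β * Real.sin α * cg)
          + Real.sin α ^ 2 := by
        rw [hy, norm_add_sq_real, norm_smul, norm_smul, real_inner_smul_left,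
          real_inner_smul_right, ha, hb, Real.norm_eq_abs, Real.norm_eq_abs,
          abs_of_nonneg hsinα, abs_of_nonneg hsinβ, ← hcg]
        ring
      rw [h1, ← hsum', ← hcosγ, hsum', ← hsum', Real.sin_add, Real.cos_add]
      nlinarith [Real.sin_sq_add_cos_sq α, Real.sin_sq_add_cos_sq β]
    have hny : ‖y‖ = Real.sin γ := by
      have h2 : Real.sqrt (‖y‖ ^ 2) = Real.sqrt (Real.sin γ ^ 2) := by rw [hnysq]
      rwa [Real.sqrt_sq (norm_nonneg y), Real.sqrt_sq hsinγ.le] at h2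
    have heq : ‖x‖ • y = ‖y‖ • x := by
      apply inner_eq_norm_mul_iff_real.1
      rw [hny, hxn, mul_one, hinner]
    rw [hxn, one_smul, hny] at heq
    refine ⟨Real.sin β / Real.sin γ, Real.sin α / Real.sin γ,
      div_nonneg hsinβ hsinγ.le, div_nonneg hsinα hsinγ.le, ?_⟩
    have hx' : x = (Real.sin γ)⁻¹ • y := by
      rw [heq, smul_smul, inv_mul_cancel₀ hsinγ.ne', one_smul]
    rw [hx', hy, smul_add, smul_smul, smul_smul]
    rw [div_eq_inv_mul, div_eq_inv_mul]


lemma hemi_inner {c y : E3} (hy : y ∈ hemi c) : 0 ≤ ⟪c, y⟫_ℝ :=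
  Real.arccos_le_pi_div_two.1 hy.2

lemma openHemi_inner {q y : E3} (hy : y ∈ openHemi q) : 0 < ⟪q, y⟫_ℝ :=
  Real.arccos_lt_pi_div_two.1 hy.2

lemma perp_of_sdist {c p : E3} (h : sdist c p = Real.pi / 2) : ⟪c, p⟫_ℝ = 0 :=
  Real.arccos_eq_pi_div_two.1 h

/-- Interior point has strictly positive inner product with any supporting center. -/
lemma interior_inner_pos {c z : E3} {A : Set E3} {ρ : ℝ} (hc : ‖c‖ = 1) (hz : ‖z‖ = 1)
    (hρ : 0 < ρ) (hball : Metric.ball z ρ ∩ S2 ⊆ A) (hsupp : ∀ y ∈ A, 0 ≤ ⟪c, y⟫_ℝ) :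
    0 < ⟪c, z⟫_ℝ := by
  have hzA : z ∈ A := hball ⟨Metric.mem_ball_self hρ, mem_S2_iff.2 hz⟩
  rcases lt_or_eq_of_le (hsupp z hzA) with h | h
  · exact h
  · exfalso
    set ε : ℝ := min ρ 1 / 3 with hε
    have hεpos : 0 < ε := by positivity
    have hε1 : ε ≤ 1 := by
      have := min_le_right ρ 1; simp only [hε]; linarith
    have hερ : ε ^ 2 + ε < ρ := by
      have h1 : ε ≤ ρ / 3 := by
        have := min_le_left ρ 1; simp only [hε]; linarith
      nlinarith
    set v : E3 := z - ε • c with hv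
    have hvsq : ‖v‖ ^ 2 = 1 + ε ^ 2 := by
      rw [hv, norm_sub_sq_real, real_inner_smul_right, norm_smul, hz, Real.norm_eq_abs,
        abs_of_nonneg hεpos.le, real_inner_comm, ← h, hc]
      ring
    have hvpos : (1:ℝ) ≤ ‖v‖ := by nlinarith [norm_nonneg v]
    have hvne : ‖v‖ ≠ 0 := by linarith
    set w : E3 := ‖v‖⁻¹ • v with hw
    have hwS : w ∈ S2 := by
      rw [mem_S2_iff, hw, norm_smul, Real.norm_eq_abs, abs_of_nonneg (by positivity),
        inv_mul_cancel₀ hvne]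
    have hvle : ‖v‖ ≤ 1 + ε ^ 2 := by nlinarith
    have hwz : dist w z < ρ := by
      have h1 : ‖w - v‖ = ‖v‖ - 1 := by
        have : w - v = (‖v‖⁻¹ - 1) • v := by rw [hw, sub_smul, one_smul]
        rw [this, norm_smul, Real.norm_eq_abs, abs_of_nonpos (by
          have : ‖v‖⁻¹ ≤ 1 := by
            rw [inv_le_one_iff₀]; right; exact hvpos
          linarith), neg_sub, sub_mul, inv_mul_cancel₀ hvne, one_mul]
      have h2 : ‖v - z‖ = ε := by
        rw [hv]; simp only [sub_sub_cancel_left, norm_neg, norm_smul, Real.norm_eq_abs,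
          abs_of_nonneg hεpos.le, hc, mul_one]
      calc dist w z = ‖w - z‖ := dist_eq_norm w z
        _ ≤ ‖w - v‖ + ‖v - z‖ := by
            have := norm_sub_le_norm_sub_add_norm_sub w v z; linarith
        _ = (‖v‖ - 1) + ε := by rw [h1, h2]
        _ < ρ := by nlinarith
    have hwA : w ∈ A := hball ⟨Metric.mem_ball.2 hwz, hwS⟩
    have : ⟪c, w⟫_ℝ = -(‖v‖⁻¹ * ε) := by
      rw [hw, real_inner_smul_right, hv, inner_sub_right, real_inner_smul_right, ← h,
        real_inner_self_eq_norm_sq, hc]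
      ring
    have h4 := hsupp w hwA
    rw [this] at h4
    have : 0 < ‖v‖⁻¹ * ε := by positivity
    linarith

/-- a closed set on the sphere with nonempty relative interior,
contained in an open hemisphere, supported by a hemisphere at every relative
boundary point, is spherically convex. -/
theorem supported_everywhere_convex (A : Set E3) (hA : A ⊆ S2) (hclosed : IsClosed A)
    (hint : relIntNonempty A) (q : E3) (hq : q ∈ S2) (hsub : A ⊆ openHemi q)
    (hsupp : ∀ p ∈ relBoundary A, ∃ c ∈ S2, A ⊆ hemi c ∧ sdist c p = Real.pi / 2) :
    SphConvex A := by
  refine ⟨hA, ?_, ?_⟩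
  · intro x hx hnx
    have h1 := openHemi_inner (hsub hx)
    have h2 := openHemi_inner (hsub hnx)
    rw [inner_neg_right] at h2
    linarith
  · intro a haA b hbA x hx
    by_contra hxA
    obtain ⟨z, hzS2, ρ, hρ, hball⟩ := hint
    have hzn : ‖z‖ = 1 := mem_S2_iff.1 hzS2
    have hzA : z ∈ A := hball ⟨mem_ball_self hρ, hzS2⟩
    have han : ‖a‖ = 1 := mem_S2_iff.1 (hA haA)
    have hbn : ‖b‖ = 1 := mem_S2_iff.1 (hA hbA)
    have hqa : 0 < ⟪q, a⟫_ℝ := openHemi_inner (hsub haA)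
    have hqb : 0 < ⟪q, b⟫_ℝ := openHemi_inner (hsub hbA)
    have hqz : 0 < ⟪q, z⟫_ℝ := openHemi_inner (hsub hzA)
    have hab : -1 < ⟪a, b⟫_ℝ := by
      have hpos : 0 < ⟪q, a + b⟫_ℝ := by rw [inner_add_right]; linarith
      have hne : a + b ≠ 0 := by
        intro h0; rw [h0, inner_zero_right] at hpos; exact lt_irrefl _ hpos
      have hnrm := norm_add_sq_real a b
      rw [han, hbn] at hnrm
      have : 0 < ‖a + b‖ := norm_pos_iff.2 hne
      nlinarith
    obtain ⟨s, t, hs, ht, hxeq⟩ := arc_comb han hbn hab hx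
    have hxS : x ∈ S2 := hx.1
    have hxn : ‖x‖ = 1 := mem_S2_iff.1 hxS
    have hqx : 0 < ⟪q, x⟫_ℝ := by
      have hst : 0 < s ∨ 0 < t := by
        by_contra hc
        push_neg at hc
        have hs0 : s = 0 := le_antisymm hc.1 hs
        have ht0 : t = 0 := le_antisymm hc.2 ht
        rw [hs0, ht0, zero_smul, zero_smul, add_zero] at hxeq
        rw [hxeq, norm_zero] at hxn
        norm_num at hxn
      rw [hxeq, inner_add_right, real_inner_smul_right, real_inner_smul_right]
      rcases hst with h | h
      · nlinarith
      · nlinarith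
    set g : ℝ → E3 := fun τ => (1 - τ) • z + τ • x with hg
    have hgq : ∀ τ ∈ Icc (0:ℝ) 1, 0 < ⟪q, g τ⟫_ℝ := by
      intro τ hτ
      simp only [hg, inner_add_right, real_inner_smul_right]
      rcases lt_or_ge τ 1 with h | h
      · nlinarith [hτ.1]
      · have : τ = 1 := le_antisymm hτ.2 h
        rw [this]; nlinarith
    have hgne : ∀ τ ∈ Icc (0:ℝ) 1, g τ ≠ 0 := by
      intro τ hτ h0
      have := hgq τ hτ
      rw [h0, inner_zero_right] at this
      exact lt_irrefl _ this
    have hgnorm : ∀ τ ∈ Icc (0:ℝ) 1, ‖g τ‖ ≠ 0 := fun τ hτ =>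
      norm_ne_zero_iff.2 (hgne τ hτ)
    set γp : ℝ → E3 := fun τ => ‖g τ‖⁻¹ • g τ with hγp
    have hγS : ∀ τ ∈ Icc (0:ℝ) 1, γp τ ∈ S2 := by
      intro τ hτ
      rw [mem_S2_iff]
      simp only [hγp]
      rw [norm_smul, Real.norm_eq_abs, abs_of_nonneg (inv_nonneg.2 (norm_nonneg _)),
        inv_mul_cancel₀ (hgnorm τ hτ)]
    have hcontg : Continuous g := by
      simp only [hg]; fun_prop
    have hcont : ContinuousOn γp (Icc (0:ℝ) 1) := by
      exact ContinuousOn.smul ((hcontg.norm.continuousOn).inv₀ hgnorm) hcontg.continuousOn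
    have hγ0 : γp 0 = z := by
      simp only [hγp, hg]
      norm_num [hzn]
    have hγ1 : γp 1 = x := by
      simp only [hγp, hg]
      norm_num [hxn]
    set S : Set ℝ := {τ | τ ∈ Icc (0:ℝ) 1 ∧ γp τ ∉ A} with hS
    have hS1 : (1:ℝ) ∈ S := ⟨⟨zero_le_one, le_rfl⟩, by rw [hγ1]; exact hxA⟩
    have hSne : S.Nonempty := ⟨1, hS1⟩
    have hbdd : BddBelow S := ⟨0, fun τ hτ => hτ.1.1⟩
    set t0 := sInf S with ht0
    have ht0mem : t0 ∈ Icc (0:ℝ) 1 :=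
      ⟨le_csInf hSne (fun τ hτ => hτ.1.1), csInf_le hbdd hS1⟩
    set p := γp t0 with hp
    have hpS : p ∈ S2 := hγS t0 ht0mem
    have hc1 : ContinuousWithinAt γp (Icc (0:ℝ) 1) t0 := hcont t0 ht0mem
    have hpA : p ∈ A := by
      by_contra hpA
      have ht0pos : 0 < t0 := by
        rcases eq_or_lt_of_le ht0mem.1 with h | h
        · exfalso; rw [hp, ← h, hγ0] at hpA; exact hpA hzA
        · exact h
      have hmem : γp ⁻¹' Aᶜ ∈ nhdsWithin t0 (Icc (0:ℝ) 1) :=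
        hc1 (hclosed.isOpen_compl.mem_nhds hpA)
      rw [Metric.mem_nhdsWithin_iff] at hmem
      obtain ⟨δ, hδ, hsub2⟩ := hmem
      set τ' := t0 - min t0 δ / 2 with hτ'
      have hmin : 0 < min t0 δ := lt_min ht0pos hδ
      have hτ'mem : τ' ∈ Icc (0:ℝ) 1 := by
        constructor
        · have := min_le_left t0 δ; simp only [hτ']; linarith
        · have := ht0mem.2; simp only [hτ']; linarith
      have hτ'ball : τ' ∈ Metric.ball t0 δ := by
        rw [Metric.mem_ball, Real.dist_eq]
        have := min_le_right t0 δ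
        rw [abs_of_nonpos (by simp only [hτ']; linarith)]
        simp only [hτ']; linarith
      have : τ' ∈ S := ⟨hτ'mem, hsub2 ⟨hτ'ball, hτ'mem⟩⟩
      have : t0 ≤ τ' := csInf_le hbdd this
      simp only [hτ'] at this; linarith
    have hpB : p ∈ relBoundary A := by
      refine ⟨hpS, fun r hr => ⟨⟨p, ⟨mem_ball_self hr, hpS⟩, hpA⟩, ?_⟩⟩
      have hmem : γp ⁻¹' (Metric.ball p r) ∈ nhdsWithin t0 (Icc (0:ℝ) 1) :=
        hc1 (Metric.isOpen_ball.mem_nhds (mem_ball_self hr))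
      rw [Metric.mem_nhdsWithin_iff] at hmem
      obtain ⟨δ, hδ, hsub2⟩ := hmem
      obtain ⟨τ, hτS, hτlt⟩ := exists_lt_of_csInf_lt hSne (lt_add_of_pos_right t0 hδ)
      have ht0leτ : t0 ≤ τ := csInf_le hbdd hτS
      have hτball : τ ∈ Metric.ball t0 δ := by
        rw [Metric.mem_ball, Real.dist_eq, abs_of_nonneg (by linarith)]
        linarith
      exact ⟨γp τ, ⟨hsub2 ⟨hτball, hτS.1⟩, hγS τ hτS.1⟩, hτS.2⟩
    obtain ⟨c, hcS, hchemi, hcperp⟩ := hsupp p hpB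
    have hcn : ‖c‖ = 1 := mem_S2_iff.1 hcS
    have hsupp' : ∀ y ∈ A, 0 ≤ ⟪c, y⟫_ℝ := fun y hy => hemi_inner (hchemi hy)
    have hcz : 0 < ⟪c, z⟫_ℝ := interior_inner_pos hcn hzn hρ hball hsupp'
    have hcx : 0 ≤ ⟪c, x⟫_ℝ := by
      rw [hxeq, inner_add_right, real_inner_smul_right, real_inner_smul_right]
      have h1 := hsupp' a haA
      have h2 := hsupp' b hbA
      have := mul_nonneg hs h1
      have := mul_nonneg ht h2
      linarith
    have hcp : ⟪c, p⟫_ℝ = 0 := perp_of_sdist hcperp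
    have hcomp : ⟪c, p⟫_ℝ = ‖g t0‖⁻¹ * ((1 - t0) * ⟪c, z⟫_ℝ + t0 * ⟪c, x⟫_ℝ) := by
      rw [hp]
      simp only [hγp, hg, real_inner_smul_right, inner_add_right]
      try ring
    have hginv : 0 < ‖g t0‖⁻¹ := by
      have := (norm_nonneg (g t0)).lt_of_ne' (hgnorm t0 ht0mem)
      positivity
    rw [hcp] at hcomp
    have hsum0 : (1 - t0) * ⟪c, z⟫_ℝ + t0 * ⟪c, x⟫_ℝ = 0 := by
      rcases mul_eq_zero.1 hcomp.symm with h | h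
      · exact absurd h (by positivity)
      · exact h
    have h1 : 0 ≤ (1 - t0) * ⟪c, z⟫_ℝ := mul_nonneg (by linarith [ht0mem.2]) hcz.le
    have h2 : 0 ≤ t0 * ⟪c, x⟫_ℝ := mul_nonneg ht0mem.1 hcx
    have h3 : (1 - t0) * ⟪c, z⟫_ℝ = 0 := by linarith
    have ht01 : t0 = 1 := by
      rcases mul_eq_zero.1 h3 with h | h
      · linarith
      · exact absurd h hcz.ne'
    rw [hp, ht01, hγ1] at hpA
    exact hxA hpA


end
end

section
/- Every spherical convex body of constant width w < π/2 on S² is a reduced body, i.e., every proper convex subbody has strictly smaller thickness. -/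
open scoped InnerProductSpace

noncomputable section

namespace CW

open Real

lemma memS2 {x : E3} : x ∈ S2 ↔ ‖x‖ = 1 := by
  simp [S2, mem_sphere_zero_iff_norm]

lemma negS2 {x : E3} (h : x ∈ S2) : -x ∈ S2 := by
  rw [memS2] at *; simpa using h

lemma inner_self_unit {x : E3} (hx : ‖x‖ = 1) : ⟪x, x⟫_ℝ = 1 := by
  rw [real_inner_self_eq_norm_mul_norm, hx]; ring

lemma inner_le_one {x y : E3} (hx : ‖x‖ = 1) (hy : ‖y‖ = 1) : ⟪x, y⟫_ℝ ≤ 1 := by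
  have := real_inner_le_norm x y
  rw [hx, hy] at this; linarith

lemma neg_one_le_inner {x y : E3} (hx : ‖x‖ = 1) (hy : ‖y‖ = 1) : -1 ≤ ⟪x, y⟫_ℝ := by
  have h := abs_real_inner_le_norm x y
  rw [hx, hy, one_mul] at h
  exact (abs_le.1 h).1

lemma inner_eq_one_iff_unit {x y : E3} (hx : ‖x‖ = 1) (hy : ‖y‖ = 1) :
    ⟪x, y⟫_ℝ = 1 ↔ x = y := by
  constructor
  · intro h
    have hn : ‖x - y‖ ^ 2 = 0 := by
      rw [norm_sub_sq_real, hx, hy, h]; ring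
    have : x - y = 0 := by
      have h2 := (pow_eq_zero_iff (n := 2) (by norm_num)).1 hn
      exact norm_eq_zero.1 h2
    exact sub_eq_zero.1 this
  · intro h; rw [h]; exact inner_self_unit hy

lemma inner_eq_neg_one_iff_unit {x y : E3} (hx : ‖x‖ = 1) (hy : ‖y‖ = 1) :
    ⟪x, y⟫_ℝ = -1 ↔ x = -y := by
  constructor
  · intro h
    have hn : ‖x + y‖ ^ 2 = 0 := by
      rw [norm_add_sq_real, hx, hy, h]; ring
    have hxy : x + y = 0 := by
      have h2 := (pow_eq_zero_iff (n := 2) (by norm_num)).1 hn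
      exact norm_eq_zero.1 h2
    exact eq_neg_of_add_eq_zero_left hxy
  · intro h
    simp [h, inner_neg_left, inner_self_unit hy, hy]

lemma sdist_nonneg {x y : E3} : 0 ≤ sdist x y := Real.arccos_nonneg _

lemma sdist_le_pi {x y : E3} : sdist x y ≤ π := Real.arccos_le_pi _

lemma sdist_comm (x y : E3) : sdist x y = sdist y x := by
  unfold sdist; rw [real_inner_comm]

lemma cos_sdist {x y : E3} (hx : ‖x‖ = 1) (hy : ‖y‖ = 1) :
    Real.cos (sdist x y) = ⟪x, y⟫_ℝ :=
  Real.cos_arccos (neg_one_le_inner hx hy) (inner_le_one hx hy)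

lemma sdist_self {x : E3} (hx : ‖x‖ = 1) : sdist x x = 0 := by
  unfold sdist; rw [inner_self_unit hx]; exact Real.arccos_one

-- conversion lemmas between sdist and inner products
lemma sdist_le_of_cos_le {x y : E3} (hx : ‖x‖ = 1) (hy : ‖y‖ = 1) {r : ℝ}
    (h0 : 0 ≤ r) (hc : Real.cos r ≤ ⟪x, y⟫_ℝ) : sdist x y ≤ r := by
  rcases le_or_gt r π with hrπ | hrπ
  · -- arccos ⟪x,y⟫ ≤ arccos (cos r) = r
    by_contra hcon
    push_neg at hcon
    have h1 : Real.cos (sdist x y) < Real.cos r :=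
      Real.cos_lt_cos_of_nonneg_of_le_pi h0 sdist_le_pi hcon
    rw [cos_sdist hx hy] at h1
    linarith
  · exact le_trans sdist_le_pi hrπ.le

lemma cos_le_of_sdist_le {x y : E3} (hx : ‖x‖ = 1) (hy : ‖y‖ = 1) {r : ℝ}
    (hrπ : r ≤ π) (h : sdist x y ≤ r) : Real.cos r ≤ ⟪x, y⟫_ℝ := by
  rw [← cos_sdist hx hy]
  exact Real.cos_le_cos_of_nonneg_of_le_pi sdist_nonneg hrπ h

lemma lt_sdist_of_lt_cos {x y : E3} (hx : ‖x‖ = 1) (hy : ‖y‖ = 1) {r : ℝ}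
    (h0 : 0 ≤ r) (hrπ : r ≤ π) (hc : ⟪x, y⟫_ℝ < Real.cos r) : r < sdist x y := by
  by_contra hcon
  push_neg at hcon
  exact absurd (cos_le_of_sdist_le hx hy hrπ hcon) (not_le.2 hc)

lemma sdist_lt_of_cos_lt {x y : E3} (hx : ‖x‖ = 1) (hy : ‖y‖ = 1) {r : ℝ}
    (h0 : 0 ≤ r) (hrπ : r ≤ π) (hc : Real.cos r < ⟪x, y⟫_ℝ) : sdist x y < r := by
  have h1 : Real.cos r < Real.cos (sdist x y) := by rwa [cos_sdist hx hy]
  by_contra hcon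
  push_neg at hcon
  exact absurd (Real.cos_le_cos_of_nonneg_of_le_pi h0 sdist_le_pi hcon) (not_le.2 h1)

lemma sdist_eq_pi_div_two_iff {x y : E3} (hx : ‖x‖ = 1) (hy : ‖y‖ = 1) :
    sdist x y = π / 2 ↔ ⟪x, y⟫_ℝ = 0 := by
  constructor
  · intro h
    have := cos_sdist hx hy
    rw [h, Real.cos_pi_div_two] at this
    exact this.symm
  · intro h; unfold sdist; rw [h]; exact Real.arccos_zero

lemma mem_hemi_iff {c z : E3} (hz : z ∈ S2) : z ∈ hemi c ↔ 0 ≤ ⟪c, z⟫_ℝ := by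
  unfold hemi sdist
  simp only [Set.mem_setOf_eq, Set.mem_sep_iff]
  constructor
  · rintro ⟨-, h⟩; exact Real.arccos_le_pi_div_two.1 h
  · intro h; exact ⟨hz, Real.arccos_le_pi_div_two.2 h⟩

lemma inner_nonneg_of_supports {c : E3} {A : Set E3} (hA : A ⊆ S2)
    (hsub : A ⊆ hemi c) {z : E3} (hz : z ∈ A) : 0 ≤ ⟪c, z⟫_ℝ :=
  (mem_hemi_iff (hA hz)).1 (hsub hz)

-- Spherical triangle inequality
lemma sdist_triangle {x y z : E3} (hx : ‖x‖ = 1) (hy : ‖y‖ = 1) (hz : ‖z‖ = 1) :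
    sdist x z ≤ sdist x y + sdist y z := by
  set α := sdist x y with hα
  set β := sdist y z with hβ
  rcases le_or_gt π (α + β) with hαβ | hαβ
  · exact le_trans sdist_le_pi hαβ
  set τ₁ := ⟪x, y⟫_ℝ with ht1
  set τ₂ := ⟪y, z⟫_ℝ with ht2
  have hs1 : ‖x - τ₁ • y‖ ^ 2 = 1 - τ₁ ^ 2 := by
    rw [norm_sub_sq_real, real_inner_smul_right, norm_smul, hx, hy]
    simp [Real.norm_eq_abs, ← ht1, mul_pow, sq_abs]; ring
  have hs2 : ‖z - τ₂ • y‖ ^ 2 = 1 - τ₂ ^ 2 := by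
    rw [norm_sub_sq_real, real_inner_smul_right, norm_smul, hz, hy]
    have : ⟪z, y⟫_ℝ = τ₂ := (real_inner_comm z y).symm
    simp [Real.norm_eq_abs, this, mul_pow, sq_abs]; ring
  have hsin1 : ‖x - τ₁ • y‖ = Real.sin α := by
    have : Real.sin α = Real.sqrt (1 - τ₁ ^ 2) := Real.sin_arccos τ₁
    rw [this, ← hs1, Real.sqrt_sq (norm_nonneg _)]
  have hsin2 : ‖z - τ₂ • y‖ = Real.sin β := by
    have hbc : Real.sin β = Real.sqrt (1 - τ₂ ^ 2) := Real.sin_arccos τ₂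
    rw [hbc, ← hs2, Real.sqrt_sq (norm_nonneg _)]
  -- Cauchy-Schwarz
  have hCS : ⟪x - τ₁ • y, z - τ₂ • y⟫_ℝ ≥ -(Real.sin α * Real.sin β) := by
    have h1 := abs_real_inner_le_norm (x - τ₁ • y) (z - τ₂ • y)
    rw [hsin1, hsin2] at h1
    have := (abs_le.1 h1).1
    linarith
  have hexp : ⟪x - τ₁ • y, z - τ₂ • y⟫_ℝ = ⟪x, z⟫_ℝ - τ₁ * τ₂ := by
    rw [inner_sub_left, inner_sub_right, inner_sub_right, real_inner_smul_right,
      real_inner_smul_left, real_inner_smul_left, real_inner_smul_right]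
    rw [inner_self_unit hy]
    have h1 : ⟪y, z⟫_ℝ = τ₂ := rfl
    have h2 : ⟪x, y⟫_ℝ = τ₁ := rfl
    rw [h1, h2]; ring
  have hcosab : Real.cos (α + β) ≤ ⟪x, z⟫_ℝ := by
    rw [Real.cos_add]
    have hca : Real.cos α = τ₁ := cos_sdist hx hy
    have hcb : Real.cos β = τ₂ := cos_sdist hy hz
    rw [hca, hcb]
    have := hCS
    rw [hexp] at this
    linarith
  exact sdist_le_of_cos_le hx hz (add_nonneg sdist_nonneg sdist_nonneg) hcosab

-- the lune thickness formula: luneTh g h = π - sdist g h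
lemma luneTh_eq {g h : E3} (hg : ‖g‖ = 1) (hh : ‖h‖ = 1) (hne : g ≠ h) (hne' : g ≠ -h) :
    luneTh g h = π - sdist g h := by
  set τ := ⟪h, g⟫_ℝ with hτ
  have hτ' : ⟪g, h⟫_ℝ = τ := (real_inner_comm g h).symm
  have hτlt : τ < 1 := by
    rcases lt_or_eq_of_le (inner_le_one hh hg) with h1 | h1
    · exact h1
    · exact absurd ((inner_eq_one_iff_unit hh hg).1 h1).symm hne
  have hτgt : -1 < τ := by
    rcases lt_or_eq_of_le (neg_one_le_inner hh hg) with h1 | h1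
    · exact h1
    · have h2 := (inner_eq_neg_one_iff_unit hh hg).1 h1.symm
      exact absurd (by rw [h2]; simp) hne'
  have hposs : (0:ℝ) < 1 - τ ^ 2 := by nlinarith
  have hnu : ‖h - τ • g‖ ^ 2 = 1 - τ ^ 2 := by
    rw [norm_sub_sq_real, real_inner_smul_right, norm_smul, hg, hh]
    simp [Real.norm_eq_abs, ← hτ, mul_pow, sq_abs]; ring
  have hnu' : ‖g - τ • h‖ ^ 2 = 1 - τ ^ 2 := by
    rw [norm_sub_sq_real, real_inner_smul_right, norm_smul, hg, hh, hτ']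
    simp [Real.norm_eq_abs, mul_pow, sq_abs]; ring
  have hnorm_eq : ‖h - τ • g‖ = Real.sqrt (1 - τ ^ 2) := by
    rw [← hnu, Real.sqrt_sq (norm_nonneg _)]
  have hnorm_eq' : ‖g - τ • h‖ = Real.sqrt (1 - τ ^ 2) := by
    rw [← hnu', Real.sqrt_sq (norm_nonneg _)]
  have hs : (0:ℝ) < Real.sqrt (1 - τ ^ 2) := Real.sqrt_pos.2 hposs
  have hinner : ⟪h - τ • g, g - τ • h⟫_ℝ = -τ * (1 - τ ^ 2) := by
    rw [inner_sub_left, inner_sub_right, inner_sub_right, real_inner_smul_left,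
      real_inner_smul_left, real_inner_smul_right, real_inner_smul_right,
      inner_self_unit hg, inner_self_unit hh, hτ', ← hτ]
    ring
  have hval : ⟪scCenter g h, scCenter h g⟫_ℝ = -τ := by
    unfold scCenter
    rw [← hτ, hτ', real_inner_smul_left, real_inner_smul_right, hinner, hnorm_eq, hnorm_eq']
    have hss : Real.sqrt (1 - τ ^ 2) * Real.sqrt (1 - τ ^ 2) = 1 - τ ^ 2 :=
      Real.mul_self_sqrt hposs.le
    field_simp
    rw [Real.sq_sqrt hposs.le]
  unfold luneTh
  show Real.arccos ⟪scCenter g h, scCenter h g⟫_ℝ = π - sdist g h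
  rw [hval]
  unfold sdist
  rw [hτ', Real.arccos_neg]

-- geodesic parametrization: points on the arc between a and b
set_option maxHeartbeats 1000000 in
lemma arc_param_mem {a b : E3} (ha : ‖a‖ = 1) (hb : ‖b‖ = 1) (hne : a ≠ b) (hne' : b ≠ -a)
    {s : ℝ} (h0 : 0 ≤ s) (hs : s ≤ sdist a b) :
    Real.cos s • a + Real.sin s • (‖b - ⟪b, a⟫_ℝ • a‖⁻¹ • (b - ⟪b, a⟫_ℝ • a)) ∈ arc a b := by
  set τ := ⟪b, a⟫_ℝ with hτ
  have hτ' : ⟪a, b⟫_ℝ = τ := (real_inner_comm a b).symm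
  have hτlt : τ < 1 := by
    rcases lt_or_eq_of_le (inner_le_one hb ha) with h1 | h1
    · exact h1
    · exact absurd ((inner_eq_one_iff_unit hb ha).1 h1).symm hne
  have hτgt : -1 < τ := by
    rcases lt_or_eq_of_le (neg_one_le_inner hb ha) with h1 | h1
    · exact h1
    · exact absurd ((inner_eq_neg_one_iff_unit hb ha).1 h1.symm) hne'
  have hposs : (0:ℝ) < 1 - τ ^ 2 := by nlinarith
  have hnu : ‖b - τ • a‖ ^ 2 = 1 - τ ^ 2 := by
    rw [norm_sub_sq_real, real_inner_smul_right, norm_smul, hb, ha]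
    simp [Real.norm_eq_abs, ← hτ, mul_pow, sq_abs]; ring
  set θ := sdist a b with hθ
  have hθpi : θ ≤ π := sdist_le_pi
  have hcosθ : Real.cos θ = τ := by rw [hθ]; rw [cos_sdist ha hb, hτ']
  have hsinθ : Real.sin θ = Real.sqrt (1 - τ ^ 2) := by
    rw [hθ]; unfold sdist; rw [hτ', Real.sin_arccos]
  have hnorm_eq : ‖b - τ • a‖ = Real.sin θ := by
    rw [hsinθ, ← hnu, Real.sqrt_sq (norm_nonneg _)]
  have hsinθpos : 0 < Real.sin θ := by
    rw [hsinθ]; exact Real.sqrt_pos.2 hposs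
  set v := ‖b - τ • a‖⁻¹ • (b - τ • a) with hv
  have hva : ⟪a, v⟫_ℝ = 0 := by
    rw [hv, real_inner_smul_right, inner_sub_right, real_inner_smul_right,
      inner_self_unit ha, hτ']
    ring
  have hvv : ⟪v, v⟫_ℝ = 1 := by
    rw [hv, real_inner_smul_right, real_inner_smul_left, real_inner_self_eq_norm_mul_norm,
      hnorm_eq]
    field_simp
  have hvb : ⟪v, b⟫_ℝ = Real.sin θ := by
    rw [hv, real_inner_smul_left, inner_sub_left, real_inner_smul_left,
      inner_self_unit hb, real_inner_comm b a, ← hτ, hnorm_eq]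
    have h2 : Real.sin θ * Real.sin θ = 1 - τ ^ 2 := by
      rw [hnorm_eq.symm]; rw [← hnu]; ring
    field_simp
    nlinarith [h2]
  set γ := Real.cos s • a + Real.sin s • v with hγ
  have hγnorm : ‖γ‖ = 1 := by
    have hsq : ‖γ‖ ^ 2 = 1 := by
      rw [hγ, norm_add_sq_real, real_inner_smul_left, real_inner_smul_right, hva,
        norm_smul, norm_smul, ha]
      have hvn : ‖v‖ = 1 := by
        have := hvv
        rw [real_inner_self_eq_norm_mul_norm] at this
        nlinarith [norm_nonneg v]
      rw [hvn]
      simp only [Real.norm_eq_abs, mul_pow, sq_abs, mul_one, one_pow]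
      nlinarith [Real.sin_sq_add_cos_sq s]
    nlinarith [norm_nonneg γ, hsq]
  have hγa : ⟪a, γ⟫_ℝ = Real.cos s := by
    rw [hγ, inner_add_right, real_inner_smul_right, real_inner_smul_right,
      inner_self_unit ha, hva]
    ring
  have hγb : ⟪γ, b⟫_ℝ = Real.cos (θ - s) := by
    rw [hγ, inner_add_left, real_inner_smul_left, real_inner_smul_left, hτ', hvb,
      Real.cos_sub, hcosθ]
    ring
  refine ⟨memS2.2 hγnorm, ?_⟩
  have h1 : sdist a γ = s := by
    unfold sdist
    rw [hγa]
    exact Real.arccos_cos h0 (le_trans hs hθpi)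
  have h2 : sdist γ b = θ - s := by
    unfold sdist
    rw [hγb]
    exact Real.arccos_cos (by linarith) (by linarith)
  rw [h1, h2]; ring

lemma geodesic_mem {A : Set E3} (hA : SphConvex A) {a b : E3} (haA : a ∈ A) (hbA : b ∈ A)
    (hne : a ≠ b) {s : ℝ} (h0 : 0 ≤ s) (hs : s ≤ sdist a b) :
    Real.cos s • a + Real.sin s • (‖b - ⟪b, a⟫_ℝ • a‖⁻¹ • (b - ⟪b, a⟫_ℝ • a)) ∈ A := by
  have ha : ‖a‖ = 1 := memS2.1 (hA.1 haA)
  have hb : ‖b‖ = 1 := memS2.1 (hA.1 hbA)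
  have hne' : b ≠ -a := by
    intro h
    exact hA.2.1 a haA (h ▸ hbA)
  exact hA.2.2 a haA b hbA (arc_param_mem ha hb hne hne' h0 hs)

-- first-order optimality: at a maximizer of a linear functional on a spherically convex set
set_option maxHeartbeats 1000000 in
lemma variational_max {A : Set E3} (hA : SphConvex A) {q y : E3} (hq : ‖q‖ = 1)
    (hyA : y ∈ A) (hmax : ∀ z ∈ A, ⟪q, z⟫_ℝ ≤ ⟪q, y⟫_ℝ) {z : E3} (hz : z ∈ A) :
    ⟪q, z⟫_ℝ ≤ ⟪q, y⟫_ℝ * ⟪y, z⟫_ℝ := by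
  have hy : ‖y‖ = 1 := memS2.1 (hA.1 hyA)
  have hzu : ‖z‖ = 1 := memS2.1 (hA.1 hz)
  by_cases hzy : z = y
  · rw [hzy, inner_self_unit hy, mul_one]
  set t := ⟪q, y⟫_ℝ with ht
  set τ := ⟪z, y⟫_ℝ with hτ
  have hτ' : ⟪y, z⟫_ℝ = τ := (real_inner_comm y z).symm
  have hτlt : τ < 1 := by
    rcases lt_or_eq_of_le (inner_le_one hzu hy) with h1 | h1
    · exact h1
    · exact absurd ((inner_eq_one_iff_unit hzu hy).1 h1) hzy
  have hθpos : 0 < sdist y z := by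
    unfold sdist
    rw [hτ']
    exact Real.arccos_pos.2 hτlt
  -- the tangent direction, as in geodesic_mem with a := y, b := z
  set v := ‖z - τ • y‖⁻¹ • (z - τ • y) with hv
  have key : ⟪q, v⟫_ℝ ≤ 0 := by
    by_contra hcon
    push_neg at hcon
    set b := ⟪q, v⟫_ℝ with hb
    set s := min (sdist y z) (min 1 b) / 2 with hsdef
    have hspos : 0 < s := by
      apply div_pos _ (by norm_num)
      exact lt_min hθpos (lt_min one_pos hcon)
    have hsθ : s ≤ sdist y z := by
      have : min (sdist y z) (min 1 b) ≤ sdist y z := min_le_left _ _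
      linarith
    have hs1 : s ≤ 1 / 2 := by
      have h1 : min (sdist y z) (min 1 b) ≤ 1 := le_trans (min_le_right _ _) (min_le_left _ _)
      rw [hsdef]; linarith
    have hsb : s ≤ b / 2 := by
      have h1 : min (sdist y z) (min 1 b) ≤ b := le_trans (min_le_right _ _) (min_le_right _ _)
      rw [hsdef]; linarith
    have hmem := geodesic_mem hA hyA hz (fun h => hzy h.symm) hspos.le hsθ
    have hval := hmax _ hmem
    rw [inner_add_right, real_inner_smul_right, real_inner_smul_right] at hval
    -- hval : cos s * ⟪q,y⟫ + sin s * ⟪q,v⟫ ≤ t     (note ⟪z,y⟫ = ⟪y... careful: form uses ⟪z, y⟫)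
    have hform : ⟪z, y⟫_ℝ = τ := rfl
    rw [hform] at hval
    have hsin_big : Real.sin s > 3 / 4 * s := by
      have h1 := Real.sin_gt_sub_cube hspos
      nlinarith [hspos, hs1, sq_nonneg s, mul_pos hspos hspos]
    have hcos_close : 1 - Real.cos s ≤ s ^ 2 / 2 := by
      have := Real.one_sub_sq_div_two_le_cos (x := s)
      linarith
    have ht1 : t ≤ 1 := inner_le_one hq hy
    -- from hval : cos s * t + sin s * b ≤ t
    have hkey : Real.sin s * b ≤ (1 - Real.cos s) * t := by nlinarith
    have hcos1 : (1:ℝ) - Real.cos s ≥ 0 := by nlinarith [Real.cos_le_one s]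
    have : Real.sin s * b ≤ s ^ 2 / 2 := by
      calc Real.sin s * b ≤ (1 - Real.cos s) * t := hkey
        _ ≤ (1 - Real.cos s) * 1 := by nlinarith
        _ ≤ s ^ 2 / 2 := by linarith
    nlinarith [hsin_big, hspos, hsb, hs1]
  -- expand: ⟪q, z - τ • y⟫ ≤ 0
  have hnz : z - τ • y ≠ 0 := by
    intro h0
    have h1 : ‖z - τ • y‖ ^ 2 = 1 - τ ^ 2 := by
      rw [norm_sub_sq_real, real_inner_smul_right, norm_smul, hzu, hy]
      simp [Real.norm_eq_abs, ← hτ, mul_pow, sq_abs]; ring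
    rw [h0] at h1
    simp at h1
    have hτgt : -1 < τ := by
      rcases lt_or_eq_of_le (neg_one_le_inner hzu hy) with h2 | h2
      · exact h2
      · have h3 := (inner_eq_neg_one_iff_unit hzu hy).1 h2.symm
        exact absurd (h3 ▸ hz) (hA.2.1 y hyA)
    nlinarith
  have hnpos : 0 < ‖z - τ • y‖ := norm_pos_iff.2 hnz
  have hqv : ⟪q, z - τ • y⟫_ℝ ≤ 0 := by
    have : ⟪q, v⟫_ℝ = ‖z - τ • y‖⁻¹ * ⟪q, z - τ • y⟫_ℝ := by
      rw [hv, real_inner_smul_right]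
    rw [this] at key
    have hinv : 0 < ‖z - τ • y‖⁻¹ := by positivity
    nlinarith
  rw [inner_sub_right, real_inner_smul_right] at hqv
  rw [hτ']
  linarith

lemma compact_of_body {A : Set E3} (hcl : IsClosed A) (hsub : A ⊆ S2) : IsCompact A :=
  (isCompact_sphere (0:E3) 1).of_isClosed_subset hcl hsub

set_option maxHeartbeats 1000000 in
-- core support construction from a maximizer of a linear functional
lemma support_core {A : Set E3} (hA : SphConvex A) {q y : E3} (hq : ‖q‖ = 1) (hyA : y ∈ A)
    (hmax : ∀ z ∈ A, ⟪q, z⟫_ℝ ≤ ⟪q, y⟫_ℝ)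
    (htlt : ⟪q, y⟫_ℝ < 1) (htgt : -1 < ⟪q, y⟫_ℝ) :
    ∃ c, Supports c A ∧ ⟪c, y⟫_ℝ = 0 ∧
      c = -(‖q - ⟪q, y⟫_ℝ • y‖⁻¹ • (q - ⟪q, y⟫_ℝ • y)) ∧
      ⟪c, q⟫_ℝ = -Real.sqrt (1 - ⟪q, y⟫_ℝ ^ 2) := by
  have hy : ‖y‖ = 1 := memS2.1 (hA.1 hyA)
  set t := ⟪q, y⟫_ℝ with ht
  have hposs : (0:ℝ) < 1 - t ^ 2 := by nlinarith
  have hnu : ‖q - t • y‖ ^ 2 = 1 - t ^ 2 := by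
    rw [norm_sub_sq_real, real_inner_smul_right, norm_smul, hq, hy]
    simp [Real.norm_eq_abs, ← ht, mul_pow, sq_abs]; ring
  have hnorm_eq : ‖q - t • y‖ = Real.sqrt (1 - t ^ 2) := by
    rw [← hnu, Real.sqrt_sq (norm_nonneg _)]
  have hs : (0:ℝ) < ‖q - t • y‖ := by
    rw [hnorm_eq]; exact Real.sqrt_pos.2 hposs
  set c := -(‖q - t • y‖⁻¹ • (q - t • y)) with hc
  have hcnorm : ‖c‖ = 1 := by
    rw [hc, norm_neg, norm_smul, Real.norm_eq_abs, abs_of_pos (by positivity)]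
    field_simp
  have hcy : ⟪c, y⟫_ℝ = 0 := by
    rw [hc, inner_neg_left, real_inner_smul_left, inner_sub_left, real_inner_smul_left,
      inner_self_unit hy, ← ht]
    ring
  have hcz : ∀ z ∈ A, 0 ≤ ⟪c, z⟫_ℝ := by
    intro z hz
    have hvar := variational_max hA hq hyA hmax hz
    rw [hc, inner_neg_left, real_inner_smul_left, inner_sub_left, real_inner_smul_left]
    have hinv : (0:ℝ) < ‖q - t • y‖⁻¹ := by positivity
    have h5 : 0 ≤ ‖q - t • y‖⁻¹ * (t * ⟪y, z⟫_ℝ - ⟪q, z⟫_ℝ) :=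
      mul_nonneg hinv.le (by linarith)
    have h6 : -(‖q - t • y‖⁻¹ * (⟪q, z⟫_ℝ - t * ⟪y, z⟫_ℝ)) =
        ‖q - t • y‖⁻¹ * (t * ⟪y, z⟫_ℝ - ⟪q, z⟫_ℝ) := by ring
    rw [h6]
    exact h5
  have hcq : ⟪c, q⟫_ℝ = -Real.sqrt (1 - t ^ 2) := by
    have hyq : ⟪y, q⟫_ℝ = t := (real_inner_comm y q).symm.trans ht.symm
    rw [hc, inner_neg_left, real_inner_smul_left, inner_sub_left, real_inner_smul_left,
      inner_self_unit hq, hyq, hnorm_eq]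
    have hss : Real.sqrt (1 - t ^ 2) * Real.sqrt (1 - t ^ 2) = 1 - t ^ 2 :=
      Real.mul_self_sqrt hposs.le
    have hsp : (0:ℝ) < Real.sqrt (1 - t ^ 2) := Real.sqrt_pos.2 hposs
    field_simp
    nlinarith [hss]
  refine ⟨c, ⟨memS2.2 hcnorm, ?_, ⟨y, hyA, (sdist_eq_pi_div_two_iff hcnorm hy).2 hcy⟩⟩, hcy, rfl, hcq⟩
  intro z hz
  exact (mem_hemi_iff (hA.1 hz)).2 (hcz z hz)

-- nearest-point支持 separation: a supporting hemisphere whose boundary passes through the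
-- point of A nearest to q, with q strictly outside
lemma exists_support_sep {A : Set E3} (hcl : IsClosed A) (hA : SphConvex A)
    (hne : A.Nonempty) (h2 : ∃ p₁ ∈ A, ∃ p₂ ∈ A, p₁ ≠ p₂)
    {q : E3} (hq : q ∈ S2) (hqA : q ∉ A) :
    ∃ c y, Supports c A ∧ y ∈ A ∧ (∀ z ∈ A, ⟪q, z⟫_ℝ ≤ ⟪q, y⟫_ℝ) ∧ ⟪c, y⟫_ℝ = 0 ∧
      ⟪c, q⟫_ℝ = -Real.sqrt (1 - ⟪q, y⟫_ℝ ^ 2) ∧ -1 < ⟪q, y⟫_ℝ ∧ ⟪q, y⟫_ℝ < 1 := by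
  have hqu : ‖q‖ = 1 := memS2.1 hq
  have hcont : Continuous fun z : E3 => ⟪q, z⟫_ℝ := continuous_const.inner continuous_id
  obtain ⟨y, hyA, hymax⟩ := (compact_of_body hcl hA.1).exists_isMaxOn hne hcont.continuousOn
  have hmax : ∀ z ∈ A, ⟪q, z⟫_ℝ ≤ ⟪q, y⟫_ℝ := fun z hz => hymax hz
  have hy : ‖y‖ = 1 := memS2.1 (hA.1 hyA)
  have htlt : ⟪q, y⟫_ℝ < 1 := by
    rcases lt_or_eq_of_le (inner_le_one hqu hy) with h1 | h1
    · exact h1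
    · exact absurd (((inner_eq_one_iff_unit hqu hy).1 h1) ▸ hyA) hqA
  have htgt : -1 < ⟪q, y⟫_ℝ := by
    rcases lt_or_eq_of_le (neg_one_le_inner hqu hy) with h1 | h1
    · exact h1
    · exfalso
      obtain ⟨p₁, hp₁, p₂, hp₂, hp12⟩ := h2
      have hall : ∀ z ∈ A, z = -q := by
        intro z hz
        have h3 : ⟪q, z⟫_ℝ ≤ -1 := h1 ▸ hmax z hz
        have h4 : ⟪q, z⟫_ℝ = -1 :=
          le_antisymm h3 (neg_one_le_inner hqu (memS2.1 (hA.1 hz)))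
        have h5 := (inner_eq_neg_one_iff_unit hqu (memS2.1 (hA.1 hz))).1 h4
        rw [h5, neg_neg]
      exact hp12 ((hall p₁ hp₁).trans (hall p₂ hp₂).symm)
  obtain ⟨c, hsupp, hcy, -, hcq⟩ := support_core hA hqu hyA hmax htlt htgt
  exact ⟨c, y, hsupp, hyA, hmax, hcy, hcq, htgt, htlt⟩

-- farthest-point supporting hemisphere
lemma exists_support_far {A : Set E3} (hcl : IsClosed A) (hA : SphConvex A)
    (hne : A.Nonempty) (h2 : ∃ p₁ ∈ A, ∃ p₂ ∈ A, p₁ ≠ p₂)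
    {q : E3} (hq : q ∈ S2) (hnq : -q ∉ A) :
    ∃ m p, Supports m A ∧ p ∈ A ∧ (∀ z ∈ A, ⟪q, p⟫_ℝ ≤ ⟪q, z⟫_ℝ) ∧ ⟪m, p⟫_ℝ = 0 ∧
      m = ‖q - ⟪q, p⟫_ℝ • p‖⁻¹ • (q - ⟪q, p⟫_ℝ • p) ∧
      ⟪m, q⟫_ℝ = Real.sqrt (1 - ⟪q, p⟫_ℝ ^ 2) ∧ -1 < ⟪q, p⟫_ℝ ∧ ⟪q, p⟫_ℝ < 1 := by
  have hqu : ‖q‖ = 1 := memS2.1 hq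
  have hnqu : ‖(-q : E3)‖ = 1 := by rw [norm_neg]; exact hqu
  have hcont : Continuous fun z : E3 => ⟪-q, z⟫_ℝ := continuous_const.inner continuous_id
  obtain ⟨p, hpA, hpmax⟩ := (compact_of_body hcl hA.1).exists_isMaxOn hne hcont.continuousOn
  have hmax : ∀ z ∈ A, ⟪-q, z⟫_ℝ ≤ ⟪-q, p⟫_ℝ := fun z hz => hpmax hz
  have hp : ‖p‖ = 1 := memS2.1 (hA.1 hpA)
  have hmin : ∀ z ∈ A, ⟪q, p⟫_ℝ ≤ ⟪q, z⟫_ℝ := by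
    intro z hz
    have h3 := hmax z hz
    rw [inner_neg_left, inner_neg_left] at h3
    linarith
  have hτlt : ⟪q, p⟫_ℝ < 1 := by
    rcases lt_or_eq_of_le (inner_le_one hqu hp) with h1 | h1
    · exact h1
    · exfalso
      obtain ⟨p₁, hp₁, p₂, hp₂, hp12⟩ := h2
      have hall : ∀ z ∈ A, z = q := by
        intro z hz
        have h3 : (1:ℝ) ≤ ⟪q, z⟫_ℝ := h1 ▸ hmin z hz
        have h4 : ⟪q, z⟫_ℝ = 1 := le_antisymm (inner_le_one hqu (memS2.1 (hA.1 hz))) h3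
        exact ((inner_eq_one_iff_unit hqu (memS2.1 (hA.1 hz))).1 h4).symm
      exact hp12 ((hall p₁ hp₁).trans (hall p₂ hp₂).symm)
  have hτgt : -1 < ⟪q, p⟫_ℝ := by
    rcases lt_or_eq_of_le (neg_one_le_inner hqu hp) with h1 | h1
    · exact h1
    · exfalso
      have h5 := (inner_eq_neg_one_iff_unit hqu hp).1 h1.symm
      have hpq : p = -q := by rw [h5, neg_neg]
      exact hnq (hpq ▸ hpA)
  have ht1 : ⟪-q, p⟫_ℝ = -⟪q, p⟫_ℝ := by rw [inner_neg_left]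
  obtain ⟨c, hsupp, hcp, hcform, hcq⟩ := support_core hA hnqu hpA hmax
    (by rw [ht1]; linarith) (by rw [ht1]; linarith)
  have hvec : -q - ⟪-q, p⟫_ℝ • p = -(q - ⟪q, p⟫_ℝ • p) := by
    rw [ht1, neg_smul]; module
  have hform : c = ‖q - ⟪q, p⟫_ℝ • p‖⁻¹ • (q - ⟪q, p⟫_ℝ • p) := by
    rw [hcform, hvec, norm_neg, smul_neg, neg_neg]
  have hcq' : ⟪c, q⟫_ℝ = Real.sqrt (1 - ⟪q, p⟫_ℝ ^ 2) := by
    have h5 : ⟪c, -q⟫_ℝ = -⟪c, q⟫_ℝ := by rw [inner_neg_right]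
    rw [h5, ht1] at hcq
    have h6 : (-⟪q, p⟫_ℝ) ^ 2 = ⟪q, p⟫_ℝ ^ 2 := by ring
    rw [h6] at hcq
    linarith
  exact ⟨c, p, hsupp, hpA, hmin, hcp, hform, hcq', hτgt, hτlt⟩

-- existence of a unit vector orthogonal to a given one
lemma exists_unit_orthogonal (p : E3) (hp : ‖p‖ = 1) :
    ∃ e : E3, ‖e‖ = 1 ∧ ⟪p, e⟫_ℝ = 0 := by
  by_cases h : p = EuclideanSpace.single 0 (1:ℝ) ∨ p = -EuclideanSpace.single 0 (1:ℝ)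
  · refine ⟨EuclideanSpace.single 1 (1:ℝ), by simp, ?_⟩
    rcases h with h | h <;> rw [h] <;>
      simp [EuclideanSpace.inner_single_right, EuclideanSpace.single_apply]
  · push_neg at h
    obtain ⟨h1, h2⟩ := h
    have hE0 : ‖(EuclideanSpace.single 0 (1:ℝ) : E3)‖ = 1 := by simp
    set t := ⟪p, EuclideanSpace.single 0 (1:ℝ)⟫_ℝ with htdef
    have htlt : t < 1 := by
      rcases lt_or_eq_of_le (inner_le_one hp hE0) with h3 | h3
      · exact h3
      · exact absurd ((inner_eq_one_iff_unit hp hE0).1 h3) h1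
    have htgt : -1 < t := by
      rcases lt_or_eq_of_le (neg_one_le_inner hp hE0) with h3 | h3
      · exact h3
      · exact absurd ((inner_eq_neg_one_iff_unit hp hE0).1 h3.symm) h2
    have hposs : (0:ℝ) < 1 - t ^ 2 := by nlinarith
    set u := EuclideanSpace.single 0 (1:ℝ) - t • p with hu
    have hnu : ‖u‖ ^ 2 = 1 - t ^ 2 := by
      rw [hu, norm_sub_sq_real, real_inner_smul_right, norm_smul, hE0, hp]
      have hcomm : ⟪EuclideanSpace.single 0 (1:ℝ), p⟫_ℝ = t :=
        (real_inner_comm _ _).symm.trans htdef.symm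
      rw [hcomm]
      simp [Real.norm_eq_abs, mul_pow, sq_abs]; ring
    have hupos : (0:ℝ) < ‖u‖ := by
      have h4 : ‖u‖ ^ 2 > 0 := by rw [hnu]; exact hposs
      by_contra hcon
      push_neg at hcon
      have : ‖u‖ = 0 := le_antisymm hcon (norm_nonneg _)
      rw [this] at h4; norm_num at h4
    refine ⟨‖u‖⁻¹ • u, ?_, ?_⟩
    · rw [norm_smul, Real.norm_eq_abs, abs_of_pos (by positivity)]
      field_simp
    · rw [real_inner_smul_right, hu, inner_sub_right, real_inner_smul_right,
        inner_self_unit hp, ← htdef]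
      ring

-- points of a spherical cap inside A
lemma cap_mem {A : Set E3} {p : E3} {r : ℝ} (hp : ‖p‖ = 1) (hr : 0 < r)
    (hsub : Metric.ball p r ∩ S2 ⊆ A) {e : E3} (he : ‖e‖ = 1) (hpe : ⟪p, e⟫_ℝ = 0)
    {s : ℝ} (h0 : 0 ≤ s) (hs1 : s ≤ 1) (hsr : s < r) :
    Real.cos s • p + Real.sin s • e ∈ A := by
  set q' := Real.cos s • p + Real.sin s • e with hq'
  have hq'n : ‖q'‖ = 1 := by
    have hsq : ‖q'‖ ^ 2 = 1 := by
      rw [hq', norm_add_sq_real, real_inner_smul_left, real_inner_smul_right, hpe,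
        norm_smul, norm_smul, hp, he]
      simp only [Real.norm_eq_abs, mul_pow, sq_abs, mul_one, one_pow, mul_zero]
      nlinarith [Real.sin_sq_add_cos_sq s]
    nlinarith [norm_nonneg q', hsq]
  have hdist : ‖q' - p‖ < r := by
    have hvec : q' - p = (Real.cos s - 1) • p + Real.sin s • e := by
      rw [hq', sub_smul, one_smul]; module
    have hsq : ‖q' - p‖ ^ 2 = 2 - 2 * Real.cos s := by
      rw [hvec, norm_add_sq_real, real_inner_smul_left, real_inner_smul_right, hpe,
        norm_smul, norm_smul, hp, he]
      simp only [Real.norm_eq_abs, mul_pow, sq_abs, mul_one, one_pow, mul_zero]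
      nlinarith [Real.sin_sq_add_cos_sq s]
    have hcos : 2 - 2 * Real.cos s ≤ s ^ 2 := by
      have := Real.one_sub_sq_div_two_le_cos (x := s)
      linarith
    have hs2 : s ^ 2 < r ^ 2 := by nlinarith
    by_contra hcon
    push_neg at hcon
    have : r ^ 2 ≤ ‖q' - p‖ ^ 2 := by nlinarith [norm_nonneg (q' - p)]
    nlinarith
  apply hsub
  refine ⟨Metric.mem_ball.2 ?_, memS2.2 hq'n⟩
  rw [dist_eq_norm]
  exact hdist

-- the interior-cap package for a body
set_option maxHeartbeats 1000000 in
lemma interior_pack {A : Set E3} (hint : relIntNonempty A) :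
    ∃ p₀, p₀ ∈ A ∧ ∃ r' : ℝ, 0 < r' ∧ r' < π / 2 ∧ (∃ p₁ ∈ A, p₁ ≠ p₀) ∧
      ∀ c : E3, ‖c‖ = 1 → (∀ z ∈ A, 0 ≤ ⟪c, z⟫_ℝ) → Real.sin r' ≤ ⟪c, p₀⟫_ℝ := by
  obtain ⟨p, hpS2, r, hr, hsub⟩ := hint
  have hp : ‖p‖ = 1 := memS2.1 hpS2
  have hpA : p ∈ A := hsub ⟨Metric.mem_ball_self hr, hpS2⟩
  set r' := min r 1 / 2 with hr'def
  have hr'pos : 0 < r' := by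
    apply div_pos _ (by norm_num)
    exact lt_min hr one_pos
  have hr'le1 : r' ≤ 1 / 2 := by
    have : min r 1 ≤ 1 := min_le_right _ _
    rw [hr'def]; linarith
  have hr'ltr : r' < r := by
    have h1 : min r 1 ≤ r := min_le_left _ _
    have : r' ≤ r / 2 := by rw [hr'def]; linarith
    linarith
  have hr'pi : r' < π / 2 := by nlinarith [Real.pi_gt_three]
  have hcosr'lt1 : Real.cos r' < 1 := by
    have := Real.cos_lt_cos_of_nonneg_of_le_pi le_rfl
      (by nlinarith [Real.pi_gt_three] : r' ≤ π) hr'pos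
    rwa [Real.cos_zero] at this
  refine ⟨p, hpA, r', hr'pos, hr'pi, ?_, ?_⟩
  · -- a second point of A
    obtain ⟨e, he, hpe⟩ := exists_unit_orthogonal p hp
    refine ⟨Real.cos r' • p + Real.sin r' • e,
      cap_mem hp hr hsub he hpe hr'pos.le (by linarith) hr'ltr, ?_⟩
    intro hcon
    have : ⟪p, Real.cos r' • p + Real.sin r' • e⟫_ℝ = Real.cos r' := by
      rw [inner_add_right, real_inner_smul_right, real_inner_smul_right,
        inner_self_unit hp, hpe]
      ring
    rw [hcon, inner_self_unit hp] at this
    linarith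
  · -- the sin bound
    intro c hcu hcnn
    set χ := ⟪c, p⟫_ℝ with hχ
    have hχle : χ ≤ 1 := inner_le_one hcu hp
    have hsinr'pos : 0 < Real.sin r' := Real.sin_pos_of_pos_of_lt_pi hr'pos
      (by nlinarith [Real.pi_gt_three])
    have hsinr'le : Real.sin r' ≤ 1 := Real.sin_le_one r'
    by_cases hcp : c = p
    · have hχ1 : χ = 1 := by rw [hχ, hcp, inner_self_unit hp]
      rw [hχ1]
      exact hsinr'le
    by_cases hcnegp : c = -p
    · exfalso
      have h1 := hcnn p hpA
      rw [hcnegp, inner_neg_left, inner_self_unit hp] at h1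
      linarith
    have hχlt : χ < 1 := by
      rcases lt_or_eq_of_le hχle with h3 | h3
      · exact h3
      · exact absurd ((inner_eq_one_iff_unit hcu hp).1 h3) hcp
    have hχgt : -1 < χ := by
      rcases lt_or_eq_of_le (neg_one_le_inner hcu hp) with h3 | h3
      · exact h3
      · exact absurd ((inner_eq_neg_one_iff_unit hcu hp).1 h3.symm) hcnegp
    have hposs : (0:ℝ) < 1 - χ ^ 2 := by nlinarith
    set u := c - χ • p with hu
    have hnu : ‖u‖ ^ 2 = 1 - χ ^ 2 := by
      rw [hu, norm_sub_sq_real, real_inner_smul_right, norm_smul, hcu, hp, ← hχ]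
      simp [Real.norm_eq_abs, mul_pow, sq_abs]; ring
    have hupos : (0:ℝ) < ‖u‖ := by
      by_contra hcon
      push_neg at hcon
      have h4 : ‖u‖ = 0 := le_antisymm hcon (norm_nonneg _)
      rw [h4] at hnu; nlinarith
    have hnorm_eq : ‖u‖ = Real.sqrt (1 - χ ^ 2) := by
      rw [← hnu, Real.sqrt_sq (norm_nonneg _)]
    set e := -(‖u‖⁻¹ • u) with he
    have heu : ‖e‖ = 1 := by
      rw [he, norm_neg, norm_smul, Real.norm_eq_abs, abs_of_pos (by positivity)]
      field_simp
    have hpe : ⟪p, e⟫_ℝ = 0 := by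
      rw [he, inner_neg_right, real_inner_smul_right, hu, inner_sub_right,
        real_inner_smul_right, inner_self_unit hp]
      have hpc : ⟪p, c⟫_ℝ = χ := (real_inner_comm c p).trans hχ.symm
      rw [hpc]
      ring
    have hce : ⟪c, e⟫_ℝ = -Real.sqrt (1 - χ ^ 2) := by
      rw [he, inner_neg_right, real_inner_smul_right, hu, inner_sub_right,
        real_inner_smul_right, inner_self_unit hcu, ← hχ, hnorm_eq]
      have hss : Real.sqrt (1 - χ ^ 2) * Real.sqrt (1 - χ ^ 2) = 1 - χ ^ 2 :=
        Real.mul_self_sqrt hposs.le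
      have hsp : (0:ℝ) < Real.sqrt (1 - χ ^ 2) := Real.sqrt_pos.2 hposs
      field_simp
      nlinarith [hss]
    have hmem := cap_mem hp hr hsub heu hpe hr'pos.le (by linarith) hr'ltr
    have h0 := hcnn _ hmem
    rw [inner_add_right, real_inner_smul_right, real_inner_smul_right, ← hχ, hce] at h0
    -- h0 : 0 ≤ cos r' * χ - sin r' * sqrt (1 - χ²)
    have hsqrtpos : (0:ℝ) < Real.sqrt (1 - χ ^ 2) := Real.sqrt_pos.2 hposs
    have hχnn : 0 ≤ χ := by
      by_contra hcon
      push_neg at hcon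
      have hcospos : 0 < Real.cos r' := Real.cos_pos_of_mem_Ioo
        ⟨by linarith [Real.pi_gt_three], hr'pi⟩
      nlinarith
    have hss : Real.sqrt (1 - χ ^ 2) * Real.sqrt (1 - χ ^ 2) = 1 - χ ^ 2 :=
      Real.mul_self_sqrt hposs.le
    by_contra hcon
    push_neg at hcon
    -- χ < sin r' with χ ≥ 0: contradiction via squares
    have hcosnn : 0 ≤ Real.cos r' := (Real.cos_pos_of_mem_Ioo
      ⟨by linarith [Real.pi_gt_three], hr'pi⟩).le
    have hc2 : Real.cos r' ^ 2 = 1 - Real.sin r' ^ 2 := by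
      nlinarith [Real.sin_sq_add_cos_sq r']
    have h0' : Real.sin r' * Real.sqrt (1 - χ ^ 2) ≤ Real.cos r' * χ := by nlinarith [h0]
    have hχsq : χ ^ 2 < Real.sin r' ^ 2 := by nlinarith
    have hρ2 : Real.sqrt (1 - χ ^ 2) ^ 2 = 1 - χ ^ 2 := Real.sq_sqrt hposs.le
    have hρgt : Real.cos r' < Real.sqrt (1 - χ ^ 2) := by
      nlinarith [hc2, hρ2, hχsq, hcosnn, hsqrtpos,
        sq_nonneg (Real.sqrt (1 - χ ^ 2) + Real.cos r')]
    have step1 : Real.cos r' * χ ≤ Real.sqrt (1 - χ ^ 2) * χ :=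
      mul_le_mul_of_nonneg_right hρgt.le hχnn
    have step2 : Real.sqrt (1 - χ ^ 2) * χ < Real.sqrt (1 - χ ^ 2) * Real.sin r' :=
      mul_lt_mul_of_pos_left hcon hsqrtpos
    have hcomm : Real.sin r' * Real.sqrt (1 - χ ^ 2) =
        Real.sqrt (1 - χ ^ 2) * Real.sin r' := mul_comm _ _
    linarith

lemma luneTh_nonneg {g h : E3} : 0 ≤ luneTh g h := Real.arccos_nonneg _

lemma widthAt_nonneg (c : E3) (A : Set E3) : 0 ≤ widthAt c A := by
  apply Real.sInf_nonneg
  rintro t ⟨c', -, -, rfl⟩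
  exact luneTh_nonneg

lemma exists_second_support {A : Set E3} (hcl : IsClosed A) (hA : SphConvex A)
    (hne : A.Nonempty) (h2 : ∃ p₁ ∈ A, ∃ p₂ ∈ A, p₁ ≠ p₂)
    {c₀ y₀ : E3} (hy₀ : y₀ ∈ A) (hc₀y₀ : ⟪c₀, y₀⟫_ℝ = 0) :
    ∃ c₁, Supports c₁ A ∧ c₁ ≠ c₀ ∧ c₁ ≠ -c₀ := by
  have hnqS2 : -y₀ ∈ S2 := negS2 (hA.1 hy₀)
  have hqA : -y₀ ∉ A := hA.2.1 y₀ hy₀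
  obtain ⟨c₁, y₁, hsupp, hy₁, hmax, hc₁y₁, hcq, hgt, hltt⟩ :=
    exists_support_sep hcl hA hne h2 hnqS2 hqA
  have hsqrtpos : 0 < Real.sqrt (1 - ⟪-y₀, y₁⟫_ℝ ^ 2) := by
    apply Real.sqrt_pos.2; nlinarith
  have hc₁q : ⟪c₁, -y₀⟫_ℝ < 0 := by rw [hcq]; linarith
  refine ⟨c₁, hsupp, ?_, ?_⟩
  · intro h
    rw [h, inner_neg_right, hc₀y₀] at hc₁q
    norm_num at hc₁q
  · intro h
    rw [h, inner_neg_left, inner_neg_right, hc₀y₀] at hc₁q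
    norm_num at hc₁q

lemma widthSet_nonempty {A : Set E3} (hcl : IsClosed A) (hA : SphConvex A)
    (hne : A.Nonempty) (h2 : ∃ p₁ ∈ A, ∃ p₂ ∈ A, p₁ ≠ p₂)
    {c₀ : E3} (hc₀ : Supports c₀ A) :
    {t | ∃ c', Supports c' A ∧ IsLunePair c₀ c' ∧ t = luneTh c₀ c'}.Nonempty := by
  obtain ⟨p, hpA, hp2⟩ := hc₀.2.2
  have hinner : ⟪c₀, p⟫_ℝ = 0 :=
    (sdist_eq_pi_div_two_iff (memS2.1 hc₀.1) (memS2.1 (hA.1 hpA))).1 hp2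
  obtain ⟨c₁, hs, hne1, hne2⟩ := exists_second_support hcl hA hne h2 hpA hinner
  refine ⟨luneTh c₀ c₁, c₁, hs, ⟨hc₀.1, hs.1, fun h => hne1 h.symm, fun h => ?_⟩, rfl⟩
  exact hne2 (by rw [h, neg_neg])

set_option maxHeartbeats 1000000 in
-- KEY LEMMA: for a body of constant width w < π/2, the diameter is at most w
lemma diam_le_width {A : Set E3} {w : ℝ} (hcl : IsClosed A) (hA : SphConvex A)
    (hne : A.Nonempty) (h2 : ∃ p₁ ∈ A, ∃ p₂ ∈ A, p₁ ≠ p₂)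
    (hw : ConstWidth A w) (hlt : w < π / 2) :
    ∀ q ∈ A, ∀ u ∈ A, Real.cos w ≤ ⟪q, u⟫_ℝ := by
  intro q hq u hu
  have hqS2 := hA.1 hq
  have hqu : ‖q‖ = 1 := memS2.1 hqS2
  have hnq : -q ∉ A := hA.2.1 q hq
  obtain ⟨m, p, hsupm, hpA, hmin, hmp, hmform, hmq, hτgt, hτlt⟩ :=
    exists_support_far hcl hA hne h2 hqS2 hnq
  set τ := ⟪q, p⟫_ℝ with hτdef
  suffices hscw : Real.cos w ≤ τ from le_trans hscw (hmin u hu)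
  have hmu : ‖m‖ = 1 := memS2.1 hsupm.1
  have hpu : ‖p‖ = 1 := memS2.1 (hA.1 hpA)
  have hwm := hw m hsupm
  have hSne := widthSet_nonempty hcl hA hne h2 hsupm
  have hSbdd : BddBelow {t | ∃ c', Supports c' A ∧ IsLunePair m c' ∧ t = luneTh m c'} := by
    refine ⟨0, ?_⟩
    rintro t ⟨c', -, -, rfl⟩
    exact luneTh_nonneg
  have hsInf : sInf {t | ∃ c', Supports c' A ∧ IsLunePair m c' ∧ t = luneTh m c'} = w := hwm
  by_cases hτpos : 0 < τ
  · -- the main case: every lune at m has thickness at least arccos τ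
    set σ := Real.arccos τ with hσdef
    have hσnn : 0 ≤ σ := Real.arccos_nonneg τ
    have hσlt : σ < π / 2 := Real.arccos_lt_pi_div_two.2 hτpos
    have hbound : ∀ t ∈ {t | ∃ c', Supports c' A ∧ IsLunePair m c' ∧ t = luneTh m c'},
        σ ≤ t := by
      rintro t ⟨c₁, hsc₁, hlp, rfl⟩
      have hc₁u : ‖c₁‖ = 1 := memS2.1 hsc₁.1
      have hlune := luneTh_eq hmu hc₁u hlp.2.2.1 hlp.2.2.2
      have hmq_d : sdist m q = π / 2 - σ := by
        show Real.arccos ⟪m, q⟫_ℝ = π / 2 - σ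
        rw [hmq]
        have hsin : Real.sqrt (1 - τ ^ 2) = Real.sin σ := (Real.sin_arccos τ).symm
        rw [hsin, ← Real.cos_pi_div_two_sub σ]
        exact Real.arccos_cos (by linarith) (by linarith [Real.pi_pos])
      have hqc₁ : sdist q c₁ ≤ π / 2 := by
        have h5 : sdist c₁ q ≤ π / 2 := (hsc₁.2.1 hq).2
        rw [sdist_comm]; exact h5
      have htri := sdist_triangle hmu hqu hc₁u
      rw [hlune]
      linarith
    have hσw : σ ≤ w := by
      rw [← hsInf]
      exact le_csInf hSne hbound
    have h6 := Real.cos_le_cos_of_nonneg_of_le_pi hσnn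
      (by linarith [Real.pi_pos] : w ≤ π) hσw
    rwa [hσdef, Real.cos_arccos (by linarith) (by linarith)] at h6
  · exfalso
    push_neg at hτpos
    have hpq : p ≠ q := by
      intro h
      rw [hτdef, h, inner_self_unit hqu] at hτpos
      linarith
    have hθ : π / 2 ≤ sdist p q := by
      show π / 2 ≤ Real.arccos ⟪p, q⟫_ℝ
      have hc : ⟪p, q⟫_ℝ = τ := (real_inner_comm p q).symm
      rw [hc]
      by_contra hcon
      push_neg at hcon
      exact absurd (Real.arccos_lt_pi_div_two.1 hcon) (not_lt.2 hτpos)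
    have hmA : m ∈ A := by
      have hg := geodesic_mem hA hpA hq hpq
        (by positivity : (0:ℝ) ≤ π / 2) hθ
      rw [Real.cos_pi_div_two, Real.sin_pi_div_two, zero_smul, one_smul, zero_add] at hg
      rwa [← hmform] at hg
    have hlt2 : sInf {t | ∃ c', Supports c' A ∧ IsLunePair m c' ∧ t = luneTh m c'} < π / 2 := by
      rw [hsInf]; exact hlt
    obtain ⟨t, ⟨c₁, hsc₁, hlp, rfl⟩, htlt⟩ := (csInf_lt_iff hSbdd hSne).1 hlt2
    have hc₁u : ‖c₁‖ = 1 := memS2.1 hsc₁.1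
    have hlune := luneTh_eq hmu hc₁u hlp.2.2.1 hlp.2.2.2
    have h5 : π / 2 < sdist m c₁ := by
      rw [hlune] at htlt; linarith
    have h7 : ⟪m, c₁⟫_ℝ < 0 := by
      have h8 := Real.cos_lt_cos_of_nonneg_of_le_pi (by positivity : (0:ℝ) ≤ π/2)
        sdist_le_pi h5
      rw [Real.cos_pi_div_two, cos_sdist hmu hc₁u] at h8
      exact h8
    have h9 := (mem_hemi_iff (hA.1 hmA)).1 (hsc₁.2.1 hmA)
    have h10 : ⟪c₁, m⟫_ℝ = ⟪m, c₁⟫_ℝ := real_inner_comm m c₁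
    linarith

end CW

set_option maxHeartbeats 1600000 in
open CW Real in
/-- every spherical body of constant width w < π/2 is reduced. -/
theorem constWidth_reduced (W : Set E3) (w : ℝ) (hW : SphConvexBody W)
    (hw : ConstWidth W w) (hlt : w < Real.pi / 2) : Reduced W := by
  obtain ⟨hWcl, hWconv, hWint⟩ := hW
  have hWsub : W ⊆ S2 := hWconv.1
  obtain ⟨p₀, hp₀W, r₀, hr₀pos, hr₀pi, hW2', hWsin⟩ := interior_pack hWint
  have hW2 : ∃ p₁ ∈ W, ∃ p₂ ∈ W, p₁ ≠ p₂ := by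
    obtain ⟨p₁, hp₁, hnep⟩ := hW2'
    exact ⟨p₁, hp₁, p₀, hp₀W, hnep⟩
  have hWne : W.Nonempty := ⟨p₀, hp₀W⟩
  have hnp₀ : -p₀ ∈ S2 := negS2 (hWsub hp₀W)
  have hnp₀W : -p₀ ∉ W := hWconv.2.1 p₀ hp₀W
  obtain ⟨c₀, y₀, hc₀supp, -, -, -, -, -, -⟩ :=
    exists_support_sep hWcl hWconv hWne hW2 hnp₀ hnp₀W
  have hwnn : 0 ≤ w := by
    have := widthAt_nonneg c₀ W
    rw [hw c₀ hc₀supp] at this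
    exact this
  have hthW : thickness W = w := by
    have hset : {t | ∃ c, Supports c W ∧ t = widthAt c W} = {w} := by
      ext t
      simp only [Set.mem_setOf_eq, Set.mem_singleton_iff]
      constructor
      · rintro ⟨c, hc, rfl⟩; exact hw c hc
      · rintro rfl; exact ⟨c₀, hc₀supp, (hw c₀ hc₀supp).symm⟩
    unfold thickness
    rw [hset]
    exact csInf_singleton w
  have hdiam := diam_le_width hWcl hWconv hWne hW2 hw hlt
  refine ⟨⟨hWcl, hWconv, hWint⟩, ?_⟩
  intro Z hZ hZW hZneq
  obtain ⟨hZcl, hZconv, hZint⟩ := hZ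
  have hZsub : Z ⊆ S2 := hZconv.1
  obtain ⟨pz, hpzZ, rz, hrzpos, hrzpi, hZ2', hZsin⟩ := interior_pack hZint
  have hZ2 : ∃ p₁ ∈ Z, ∃ p₂ ∈ Z, p₁ ≠ p₂ := by
    obtain ⟨p₁, hp₁, hnep⟩ := hZ2'
    exact ⟨p₁, hp₁, pz, hpzZ, hnep⟩
  have hZne : Z.Nonempty := ⟨pz, hpzZ⟩
  obtain ⟨x, hxW, hxZ⟩ : ∃ x, x ∈ W ∧ x ∉ Z := by
    by_contra hcon
    push_neg at hcon
    exact hZneq (Set.Subset.antisymm hZW (fun z hz => hcon z hz))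
  have hxS2 : x ∈ S2 := hWsub hxW
  have hxu : ‖x‖ = 1 := memS2.1 hxS2
  obtain ⟨c, y, hcsupp, hyZ, hymax, hcy, hcx, ht1gt, ht1lt⟩ :=
    exists_support_sep hZcl hZconv hZne hZ2 hxS2 hxZ
  have hcu : ‖c‖ = 1 := memS2.1 hcsupp.1
  have hyu : ‖y‖ = 1 := memS2.1 (hZsub hyZ)
  have hcwpos : 0 < Real.cos w :=
    Real.cos_pos_of_mem_Ioo ⟨by linarith [Real.pi_pos], hlt⟩
  have hcZ : c ∉ Z := by
    intro hcZ'
    have h1 := hdiam c (hZW hcZ') y (hZW hyZ)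
    rw [hcy] at h1
    linarith
  obtain ⟨c'', z', hc''supp, hz'Z, hz'max, hc''z', hc''c, ht2gt, ht2lt⟩ :=
    exists_support_sep hZcl hZconv hZne hZ2 hcsupp.1 hcZ
  set t₂ := ⟪c, z'⟫_ℝ with ht₂def
  have ht₂pos : 0 < t₂ := by
    have h1 := hZsin c hcu (fun z hz => inner_nonneg_of_supports hZsub hcsupp.2.1 hz)
    have h2 : 0 < Real.sin rz :=
      Real.sin_pos_of_pos_of_lt_pi hrzpos (by linarith [Real.pi_pos])
    have h3 : ⟪c, pz⟫_ℝ ≤ t₂ := hz'max pz hpzZ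
    linarith
  set t₁ := ⟪x, y⟫_ℝ with ht₁def
  set d₁ := Real.arccos t₁ with hd₁def
  have hd₁pos : 0 < d₁ := Real.arccos_pos.2 ht1lt
  have hd₁w : d₁ ≤ w := by
    have h1 := hdiam x hxW y (hZW hyZ)
    exact sdist_le_of_cos_le hxu hyu hwnn h1
  have hcsx : sdist c x = d₁ + π / 2 := by
    show Real.arccos ⟪c, x⟫_ℝ = d₁ + π / 2
    rw [hcx]
    have hsin : Real.sqrt (1 - t₁ ^ 2) = Real.sin d₁ := (Real.sin_arccos t₁).symm
    have hcoseq : -Real.sqrt (1 - t₁ ^ 2) = Real.cos (d₁ + π / 2) := by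
      rw [Real.cos_add_pi_div_two, hsin]
    rw [hcoseq]
    exact Real.arccos_cos (by positivity) (by linarith)
  have hz'u : ‖z'‖ = 1 := memS2.1 (hZsub hz'Z)
  have htri := sdist_triangle hcu hz'u hxu
  have hz'x : sdist z' x ≤ w := by
    have h1 := hdiam z' (hZW hz'Z) x hxW
    exact sdist_le_of_cos_le hz'u hxu hwnn h1
  have harc : π / 2 - w < Real.arccos t₂ := by
    have heq : sdist c z' = Real.arccos t₂ := rfl
    linarith
  have ht₂sin : t₂ < Real.sin w := by
    have h1 := Real.cos_lt_cos_of_nonneg_of_le_pi (by linarith : (0:ℝ) ≤ π / 2 - w)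
      (Real.arccos_le_pi t₂) harc
    rwa [Real.cos_arccos (by linarith) (by linarith), Real.cos_pi_div_two_sub] at h1
  have hc''u : ‖c''‖ = 1 := memS2.1 hc''supp.1
  have hsqnn : (0:ℝ) ≤ 1 - t₂ ^ 2 := by nlinarith
  have hsq : Real.cos w < Real.sqrt (1 - t₂ ^ 2) := by
    have hc2 : Real.cos w ^ 2 = 1 - Real.sin w ^ 2 := by
      nlinarith [Real.sin_sq_add_cos_sq w]
    have ht₂sq : t₂ ^ 2 < Real.sin w ^ 2 := by nlinarith
    have hρ2 : Real.sqrt (1 - t₂ ^ 2) ^ 2 = 1 - t₂ ^ 2 := Real.sq_sqrt hsqnn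
    nlinarith [Real.sqrt_nonneg (1 - t₂ ^ 2), hρ2]
  have hinner_cc'' : ⟪c, c''⟫_ℝ = -Real.sqrt (1 - t₂ ^ 2) :=
    (real_inner_comm c'' c).trans hc''c
  have hcne : c ≠ c'' := by
    intro h
    rw [h, inner_self_unit hc''u] at hinner_cc''
    nlinarith [Real.sqrt_nonneg (1 - t₂ ^ 2)]
  have hcnene : c ≠ -c'' := by
    intro h
    rw [h, inner_neg_left, inner_self_unit hc''u] at hinner_cc''
    have h1 : Real.sqrt (1 - t₂ ^ 2) = 1 := by linarith
    have h2 := Real.sq_sqrt hsqnn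
    rw [h1] at h2
    nlinarith
  have hlunepair : IsLunePair c c'' := ⟨hcsupp.1, hc''supp.1, hcne, hcnene⟩
  have hluneval : luneTh c c'' < w := by
    rw [luneTh_eq hcu hc''u hcne hcnene]
    have h1 : π - w < sdist c c'' := by
      apply lt_sdist_of_lt_cos hcu hc''u (by linarith [Real.pi_pos])
        (by linarith [Real.pi_pos])
      rw [hinner_cc'', Real.cos_pi_sub]
      linarith
    linarith
  have h21 : widthAt c Z ≤ luneTh c c'' := by
    apply csInf_le
    · refine ⟨0, ?_⟩
      rintro t ⟨c', -, -, rfl⟩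
      exact luneTh_nonneg
    · exact ⟨c'', hc''supp, hlunepair, rfl⟩
  have h22 : thickness Z ≤ widthAt c Z := by
    apply csInf_le
    · refine ⟨0, ?_⟩
      rintro t ⟨c', -, rfl⟩
      exact widthAt_nonneg c' Z
    · exact ⟨c, hcsupp, rfl⟩
  rw [hthW]
  linarith

end
end
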